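/- For all indices i, j ∈ {1, …, n}, the disagreement between the oracle hypotheses of domains i and j on the i-th marginal satisfies E_{x~D_i^X} |h_i*(x) − h_j*(x)| ≤ ε_i(h*) + ε_j(h*) + ε_i* + ε_j* + (1/2) d_{HΔH}(D_i^X, D_j^X), where h* ∈ H is any minimizer over H of Σ_{j=1}^n ε_j(h). -/

import Mathlib

open MeasureTheory

/-- Risk of hypothesis `h` under a distribution `D` on `X × {0,1}`:
`ε_D(h) = P_{(x,y)~D}(h(x) ≠ y)`. -/
noncomputable def risk {X : Type*} [MeasurableSpace X] (D : Measure (X × Bool)) (h : X → Bool) : ℝ :=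
  (D {p | h p.1 ≠ p.2}).toReal

/-- Disagreement `E_{x~μ} |h(x) − h'(x)|` of two `{0,1}`-valued hypotheses under `μ`. -/
noncomputable def disag {X : Type*} [MeasurableSpace X] (μ : Measure X) (h h' : X → Bool) : ℝ :=
  (μ {x | h x ≠ h' x}).toReal

/-- `H`-divergence `d_H(μ, ν) = 2 sup_{h ∈ H} |P_μ(h = 1) − P_ν(h = 1)|`. -/
noncomputable def Hdiv {X : Type*} [MeasurableSpace X] (H : Set (X → Bool)) (μ ν : Measure X) : ℝ :=
  2 * ⨆ h ∈ H, |(μ {x | h x = true}).toReal - (ν {x | h x = true}).toReal|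

/-- Symmetric-difference divergence
`d_{HΔH}(μ, ν) = 2 sup_{h,h' ∈ H} |P_μ(h ≠ h') − P_ν(h ≠ h')|`. -/
noncomputable def HDHdiv {X : Type*} [MeasurableSpace X] (H : Set (X → Bool)) (μ ν : Measure X) : ℝ :=
  2 * ⨆ h ∈ H, ⨆ h' ∈ H, |(μ {x | h x ≠ h' x}).toReal - (ν {x | h x ≠ h' x}).toReal|

/-- Marginal `D^X` on `X` of a distribution on `X × {0,1}`. -/
noncomputable def marg {X : Type*} [MeasurableSpace X] (D : Measure (X × Bool)) : Measure X :=
  D.map Prod.fst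

/-- Subadditivity of measure `toReal` over an inclusion into a union, for a finite measure. -/
lemma toReal_tri {Y : Type*} [MeasurableSpace Y] (μ : Measure Y) [IsFiniteMeasure μ]
    {A B C : Set Y} (hsub : A ⊆ B ∪ C) :
    (μ A).toReal ≤ (μ B).toReal + (μ C).toReal := by
  have h1 : μ A ≤ μ B + μ C := (measure_mono hsub).trans (measure_union_le B C)
  have h2 : μ B + μ C ≠ ⊤ := ENNReal.add_ne_top.mpr ⟨measure_ne_top μ B, measure_ne_top μ C⟩
  calc (μ A).toReal ≤ (μ B + μ C).toReal := ENNReal.toReal_mono h2 h1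
    _ = (μ B).toReal + (μ C).toReal :=
      ENNReal.toReal_add (measure_ne_top μ B) (measure_ne_top μ C)

/-- Triangle inequality for disagreement. -/
lemma disag_tri {X : Type*} [MeasurableSpace X] (μ : Measure X) [IsFiniteMeasure μ]
    (f g k : X → Bool) : disag μ f g ≤ disag μ f k + disag μ k g := by
  apply toReal_tri
  intro x hx
  by_cases h1 : f x = k x
  · right; simpa [Set.mem_setOf_eq, h1] using hx
  · left; exact h1

/-- The disagreement under the marginal is bounded by the sum of the risks. -/
lemma disag_le_risk {X : Type*} [MeasurableSpace X] (D : Measure (X × Bool))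
    [IsProbabilityMeasure D] {f g : X → Bool} (hf : Measurable f) (hg : Measurable g) :
    disag (marg D) f g ≤ risk D f + risk D g := by
  have hms : MeasurableSet {x | f x ≠ g x} := (measurableSet_eq_fun hf hg).compl
  have hmap : marg D {x | f x ≠ g x} = D (Prod.fst ⁻¹' {x | f x ≠ g x}) :=
    Measure.map_apply measurable_fst hms
  unfold disag risk
  rw [hmap]
  apply toReal_tri
  intro p hp
  by_cases h1 : f p.1 = p.2
  · right
    intro hgp
    exact hp (h1.trans hgp.symm)
  · left; exact h1

/-- `E_{x~D_i^X} |h_i*(x) − h_j*(x)| ≤ ε_i(h*) + ε_j(h*) + ε_i* + ε_j* + (1/2) d_{HΔH}(D_i^X, D_j^X)`. -/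
theorem oracle_disagreement_bound {X : Type*} [MeasurableSpace X]
    (H : Set (X → Bool)) (hHne : H.Nonempty) (hHmeas : ∀ h ∈ H, Measurable h)
    (n : ℕ) (hn : 0 < n)
    (D : Fin n → Measure (X × Bool)) (hD : ∀ i, IsProbabilityMeasure (D i))
    (hstar : Fin n → (X → Bool)) (hstar_mem : ∀ i, hstar i ∈ H)
    (hstar_min : ∀ i, ∀ g ∈ H, risk (D i) (hstar i) ≤ risk (D i) g)
    (hstarAll : X → Bool) (hstarAll_mem : hstarAll ∈ H)
    (hstarAll_min : ∀ g ∈ H, ∑ k, risk (D k) hstarAll ≤ ∑ k, risk (D k) g)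
    (i j : Fin n) :
    disag (marg (D i)) (hstar i) (hstar j) ≤
      risk (D i) hstarAll + risk (D j) hstarAll +
      risk (D i) (hstar i) + risk (D j) (hstar j) +
      (1 / 2) * HDHdiv H (marg (D i)) (marg (D j)) := by
  haveI := hD i
  haveI := hD j
  haveI : IsProbabilityMeasure (marg (D i)) :=
    MeasureTheory.Measure.isProbabilityMeasure_map (Measurable.aemeasurable measurable_fst)
  haveI : IsProbabilityMeasure (marg (D j)) :=
    MeasureTheory.Measure.isProbabilityMeasure_map (Measurable.aemeasurable measurable_fst)
  set μ := marg (D i)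
  set ν := marg (D j)
  -- abbreviation for the divergence summand
  set F : (X → Bool) → (X → Bool) → ℝ :=
    fun f g => |(μ {x | f x ≠ g x}).toReal - (ν {x | f x ≠ g x}).toReal| with hF
  have hle1 : ∀ (m : Measure X) [IsProbabilityMeasure m] (S : Set X), (m S).toReal ≤ 1 := by
    intro m hm S
    have h1 : m S ≤ 1 := prob_le_one
    have := ENNReal.toReal_mono ENNReal.one_ne_top h1
    simpa using this
  have hFle : ∀ f g, F f g ≤ 1 := by
    intro f g
    rw [abs_sub_le_iff]
    constructor
    · have := hle1 μ {x | f x ≠ g x}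
      have h0 : (0:ℝ) ≤ (ν {x | f x ≠ g x}).toReal := ENNReal.toReal_nonneg
      linarith
    · have := hle1 ν {x | f x ≠ g x}
      have h0 : (0:ℝ) ≤ (μ {x | f x ≠ g x}).toReal := ENNReal.toReal_nonneg
      linarith
  -- F f g ≤ the nested sup, for f g ∈ H
  have hsup : ∀ f ∈ H, ∀ g ∈ H, F f g ≤ ⨆ h ∈ H, ⨆ h' ∈ H, F h h' := by
    intro f hf g hg
    have hTle : ∀ h : X → Bool, (⨆ _ : h ∈ H, ⨆ h' ∈ H, F h h') ≤ 1 := by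
      intro h
      exact Real.iSup_le (fun _ => Real.iSup_le
        (fun h' => Real.iSup_le (fun _ => hFle h h') zero_le_one) zero_le_one) zero_le_one
    have step1 : F f g ≤ ⨆ g ∈ H, F f g := by
      have hb : BddAbove (Set.range fun g => ⨆ _ : g ∈ H, F f g) := by
        refine ⟨1, ?_⟩
        rintro _ ⟨g', rfl⟩
        exact Real.iSup_le (fun _ => hFle f g') zero_le_one
      calc F f g = ⨆ _ : g ∈ H, F f g := (ciSup_pos (f := fun _ : g ∈ H => F f g) hg).symm
        _ ≤ ⨆ g ∈ H, F f g := le_ciSup hb g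
    have step2 : (⨆ g ∈ H, F f g) ≤ ⨆ h ∈ H, ⨆ h' ∈ H, F h h' := by
      have hb : BddAbove (Set.range fun h => ⨆ _ : h ∈ H, ⨆ h' ∈ H, F h h') :=
        ⟨1, by rintro _ ⟨h, rfl⟩; exact hTle h⟩
      calc (⨆ g ∈ H, F f g) = ⨆ _ : f ∈ H, ⨆ g ∈ H, F f g := (ciSup_pos (f := fun _ : f ∈ H => ⨆ g ∈ H, F f g) hf).symm
        _ ≤ ⨆ h ∈ H, ⨆ h' ∈ H, F h h' := le_ciSup hb f
    exact step1.trans step2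
  -- transfer disagreement between marginals
  have htransfer : ∀ f ∈ H, ∀ g ∈ H,
      disag μ f g ≤ disag ν f g + (1 / 2) * HDHdiv H μ ν := by
    intro f hf g hg
    have h1 : disag μ f g - disag ν f g ≤ F f g := le_abs_self _
    have h2 := hsup f hf g hg
    have h3 : (1 / 2) * HDHdiv H μ ν = ⨆ h ∈ H, ⨆ h' ∈ H, F h h' := by
      unfold HDHdiv; ring
    unfold disag at *
    linarith
  -- main chain
  have t1 : disag μ (hstar i) (hstar j) ≤
      disag μ (hstar i) hstarAll + disag μ hstarAll (hstar j) :=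
    disag_tri μ _ _ _
  have t2 : disag μ (hstar i) hstarAll ≤ risk (D i) (hstar i) + risk (D i) hstarAll :=
    disag_le_risk (D i) (hHmeas _ (hstar_mem i)) (hHmeas _ hstarAll_mem)
  have t3 : disag μ hstarAll (hstar j) ≤
      disag ν hstarAll (hstar j) + (1 / 2) * HDHdiv H μ ν :=
    htransfer _ hstarAll_mem _ (hstar_mem j)
  have t4 : disag ν hstarAll (hstar j) ≤ risk (D j) hstarAll + risk (D j) (hstar j) :=
    disag_le_risk (D j) (hHmeas _ hstarAll_mem) (hHmeas _ (hstar_mem j))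
  linarith
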